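/- If ω : {0,…,p−2} → ℤ≥0 is antipalindromic with range {0,1,…,ζ}, then the distribution of φ_ω^(m) is palindromic: for every m ≥ 0 and every j with 0 ≤ j ≤ mζ, one has π_m^ω(j) = π_m^ω(mζ − j). -/

import Mathlib

open MeasureTheory
open scoped NNReal ENNReal

namespace Chacon

/-- The space of digit sequences with digits in `{0, …, p-1}`. -/
def Gamma (p : ℕ) : Set (ℕ → ℕ) := {x | ∀ i, x i < p}

/-- `Γ*`: sequences with digits `< p` having infinitely many coordinates `≠ p - 1`. -/
def GammaStar (p : ℕ) : Set (ℕ → ℕ) :=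
  {x | (∀ i, x i < p) ∧ {i | x i ≠ p - 1}.Infinite}

/-- The least index `i` with `x i ≠ p - 1`. -/
noncomputable def firstNot (p : ℕ) (x : ℕ → ℕ) : ℕ :=
  sInf {i | x i ≠ p - 1}

/-- `φ(x) = x_i` where `i` is the least index with `x_i ≠ p - 1`. -/
noncomputable def phi (p : ℕ) (x : ℕ → ℕ) : ℕ :=
  x (firstNot p x)

/-- The odometer `S` (addition of `1` with carry): the initial run of digits
`p - 1` is replaced by zeros, and the first digit `≠ p - 1` is increased by one. -/
noncomputable def odo (p : ℕ) (x : ℕ → ℕ) : ℕ → ℕ :=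
  fun i =>
    if i < firstNot p x then 0
    else if i = firstNot p x then x i + 1
    else x i

/-- `φ^(m)(x) = ∑_{j=0}^{m-1} φ(S^j x)`. -/
noncomputable def phiSum (p m : ℕ) (x : ℕ → ℕ) : ℕ :=
  ∑ j ∈ Finset.range m, phi p ((odo p)^[j] x)

/-- The base-`p` digit sequence of a real number `u`. -/
noncomputable def digitsOf (p : ℕ) (u : ℝ) : ℕ → ℕ :=
  fun i => (⌊u * (p : ℝ) ^ (i + 1)⌋).toNat % p

/-- `λ`: the product probability measure on digit sequences under which the
coordinates are i.i.d., uniformly distributed in `{0, …, p-1}`; it is realized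
concretely as the distribution of the base-`p` digit sequence of a uniformly
distributed random point of `[0,1)`. -/
noncomputable def lam (p : ℕ) : Measure (ℕ → ℕ) :=
  Measure.map (digitsOf p) (volume.restrict (Set.Ico (0 : ℝ) 1))

/-- `π_m(j) = λ({x : φ^(m)(x) = j})`. -/
noncomputable def pim (p m j : ℕ) : ℝ≥0∞ :=
  lam p {x | phiSum p m x = j}

/-- `P_m^p(t) = ∑_{j ≥ 0} π_m(j) t^j`, a real polynomial
(the sum is over `0 ≤ j ≤ m (p-2)` since `0 ≤ φ^(m) ≤ m (p-2)` a.s.). -/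
noncomputable def P (p m : ℕ) (t : ℝ) : ℝ :=
  ∑ j ∈ Finset.range (m * (p - 2) + 1), (pim p m j).toReal * t ^ j

/-- The `n`-th triangular number `Δ_n = n (n+1) / 2`. -/
def tri (n : ℕ) : ℕ := n * (n + 1) / 2

/-- The degree `D_m` of `P_m^p`: the largest `j` with `π_m(j) ≠ 0`. -/
noncomputable def D (p m : ℕ) : ℕ := sSup {j | pim p m j ≠ 0}

/-- The lower degree `d_m` of `P_m^p`: the least `j` with `π_m(j) ≠ 0`. -/
noncomputable def d (p m : ℕ) : ℕ := sInf {j | pim p m j ≠ 0}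


/-- `φ_ω(x) = ω(x_i)` where `i` is the least index with `x_i ≠ p - 1`. -/
noncomputable def phiOmega (p : ℕ) (ω : ℕ → ℕ) (x : ℕ → ℕ) : ℕ :=
  ω (x (firstNot p x))

/-- `φ_ω^(m)(x) = ∑_{j=0}^{m-1} φ_ω(S^j x)`. -/
noncomputable def phiOmegaSum (p : ℕ) (ω : ℕ → ℕ) (m : ℕ) (x : ℕ → ℕ) : ℕ :=
  ∑ j ∈ Finset.range m, phiOmega p ω ((odo p)^[j] x)

/-- `π_m^ω(j) = λ({x : φ_ω^(m)(x) = j})`. -/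
noncomputable def pimOmega (p : ℕ) (ω : ℕ → ℕ) (m j : ℕ) : ℝ≥0∞ :=
  lam p {x | phiOmegaSum p ω m x = j}

/-- `ω : {0, …, p-2} → ℤ≥0` is antipalindromic with range exactly `{0, 1, …, ζ}`
and `ω j = ζ - ω (p - 2 - j)` for all `0 ≤ j ≤ p - 2`. -/
def Antipalindromic (p ζ : ℕ) (ω : ℕ → ℕ) : Prop :=
  (∀ j, j ≤ p - 2 → ω j ≤ ζ) ∧
  (∀ v, v ≤ ζ → ∃ j, j ≤ p - 2 ∧ ω j = v) ∧
  (∀ j, j ≤ p - 2 → ω j + ω (p - 2 - j) = ζ)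


/-- digitwise reflection -/
def Rseq (p : ℕ) (x : ℕ → ℕ) : ℕ → ℕ := fun j => p - 1 - x j

/-- good sequences: digits `< p`, infinitely many digits `≠ p - 1` -/
def Good (p : ℕ) (x : ℕ → ℕ) : Prop :=
  (∀ j, x j < p) ∧ ∀ n, ∃ j, n ≤ j ∧ x j ≠ p - 1

lemma odo_of_lt {p : ℕ} {x : ℕ → ℕ} {j : ℕ} (h : j < firstNot p x) :
    odo p x j = 0 := by
  unfold odo; rw [if_pos h]

lemma odo_of_eq {p : ℕ} {x : ℕ → ℕ} :
    odo p x (firstNot p x) = x (firstNot p x) + 1 := by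
  unfold odo; rw [if_neg (lt_irrefl _), if_pos rfl]

lemma odo_of_gt {p : ℕ} {x : ℕ → ℕ} {j : ℕ} (h : firstNot p x < j) :
    odo p x j = x j := by
  unfold odo; rw [if_neg (by omega), if_neg (by omega)]

lemma firstNot_eq_of {p : ℕ} (x : ℕ → ℕ) {i : ℕ} (hi : x i ≠ p - 1)
    (hlt : ∀ j, j < i → x j = p - 1) : firstNot p x = i := by
  have h1 : firstNot p x ≤ i := Nat.sInf_le hi
  have h2 : ¬ firstNot p x < i := by
    intro h
    have hmem : firstNot p x ∈ {j | x j ≠ p - 1} :=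
      Nat.sInf_mem (s := {j | x j ≠ p - 1}) ⟨i, hi⟩
    exact hmem (hlt _ h)
  omega

lemma Good.firstNot_mem {p : ℕ} {x : ℕ → ℕ} (hx : Good p x) :
    x (firstNot p x) ≠ p - 1 := by
  obtain ⟨j, -, hj⟩ := hx.2 0
  exact Nat.sInf_mem (s := {i | x i ≠ p - 1}) ⟨j, hj⟩

lemma firstNot_lt_eq {p : ℕ} {x : ℕ → ℕ} {j : ℕ} (h : j < firstNot p x) :
    x j = p - 1 := by
  have := Nat.notMem_of_lt_sInf (s := {i | x i ≠ p - 1}) h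
  simpa using this

lemma Good.digit_le {p : ℕ} {x : ℕ → ℕ} (hp : 3 ≤ p) (hx : Good p x) :
    x (firstNot p x) ≤ p - 2 := by
  have h1 := hx.1 (firstNot p x)
  have h2 := hx.firstNot_mem
  omega

lemma good_odo {p : ℕ} {x : ℕ → ℕ} (hp : 3 ≤ p) (hx : Good p x) :
    Good p (odo p x) := by
  constructor
  · intro j
    rcases lt_trichotomy j (firstNot p x) with h | h | h
    · rw [odo_of_lt h]; omega
    · subst h; rw [odo_of_eq]; have := hx.digit_le hp; omega
    · rw [odo_of_gt h]; exact hx.1 j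
  · intro n
    obtain ⟨j, hj1, hj2⟩ := hx.2 (max n (firstNot p x + 1))
    refine ⟨j, by omega, ?_⟩
    rw [odo_of_gt (by omega)]
    exact hj2

lemma good_iter {p : ℕ} {x : ℕ → ℕ} (hp : 3 ≤ p) (hx : Good p x) (k : ℕ) :
    Good p ((odo p)^[k] x) := by
  induction k with
  | zero => simpa using hx
  | succ k ih => rw [Function.iterate_succ_apply']; exact good_odo hp ih

lemma firstNot_Rseq_odo {p : ℕ} {x : ℕ → ℕ} (hp : 3 ≤ p) (hx : Good p x) :
    firstNot p (Rseq p (odo p x)) = firstNot p x := by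
  have h1 := hx.digit_le hp
  apply firstNot_eq_of
  · show p - 1 - (odo p x (firstNot p x)) ≠ p - 1
    rw [odo_of_eq]
    omega
  · intro j hj
    show p - 1 - (odo p x j) = p - 1
    rw [odo_of_lt hj]
    omega

lemma Rseq_odo_firstNot_digit {p : ℕ} {x : ℕ → ℕ} (hp : 3 ≤ p) (hx : Good p x) :
    Rseq p (odo p x) (firstNot p x) = p - 2 - x (firstNot p x) := by
  have h1 := hx.digit_le hp
  show p - 1 - (odo p x (firstNot p x)) = p - 2 - x (firstNot p x)
  rw [odo_of_eq]
  omega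

lemma odo_Rseq_odo {p : ℕ} {x : ℕ → ℕ} (hp : 3 ≤ p) (hx : Good p x) :
    odo p (Rseq p (odo p x)) = Rseq p x := by
  have hfn := firstNot_Rseq_odo hp hx
  have hle := hx.digit_le hp
  funext j
  show odo p (Rseq p (odo p x)) j = p - 1 - x j
  rcases lt_trichotomy j (firstNot p x) with h | h | h
  · rw [odo_of_lt (by rw [hfn]; exact h)]
    have := firstNot_lt_eq (p := p) (x := x) h
    omega
  · subst h
    rw [show firstNot p x = firstNot p (Rseq p (odo p x)) from hfn.symm, odo_of_eq,
      hfn, Rseq_odo_firstNot_digit hp hx]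
    omega
  · rw [odo_of_gt (by rw [hfn]; exact h)]
    show p - 1 - (odo p x j) = p - 1 - x j
    rw [odo_of_gt h]

lemma phiOmega_le {p ζ : ℕ} {ω : ℕ → ℕ} {x : ℕ → ℕ} (hp : 3 ≤ p)
    (hω : Antipalindromic p ζ ω) (hx : Good p x) :
    phiOmega p ω x ≤ ζ :=
  hω.1 _ (hx.digit_le hp)

lemma phiOmega_Rseq_odo {p ζ : ℕ} {ω : ℕ → ℕ} {x : ℕ → ℕ} (hp : 3 ≤ p)
    (hω : Antipalindromic p ζ ω) (hx : Good p x) :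
    phiOmega p ω (Rseq p (odo p x)) + phiOmega p ω x = ζ := by
  have hle := hx.digit_le hp
  unfold phiOmega
  rw [firstNot_Rseq_odo hp hx, Rseq_odo_firstNot_digit hp hx]
  have := hω.2.2 (x (firstNot p x)) hle
  omega

lemma iter_odo_Rseq {p : ℕ} (hp : 3 ≤ p) :
    ∀ (k : ℕ) (x : ℕ → ℕ), Good p x →
      (odo p)^[k] (Rseq p ((odo p)^[k] x)) = Rseq p x := by
  intro k
  induction k with
  | zero => intro x _; simp
  | succ k ih =>
    intro x hx
    rw [Function.iterate_succ_apply' (odo p) k x,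
      Function.iterate_succ_apply (odo p) k]
    rw [odo_Rseq_odo hp (good_iter hp hx k)]
    exact ih _ hx

lemma phiOmegaSum_le {p ζ : ℕ} {ω : ℕ → ℕ} {x : ℕ → ℕ} (hp : 3 ≤ p)
    (hω : Antipalindromic p ζ ω) (hx : Good p x) (m : ℕ) :
    phiOmegaSum p ω m x ≤ m * ζ := by
  unfold phiOmegaSum
  calc ∑ j ∈ Finset.range m, phiOmega p ω ((odo p)^[j] x)
      ≤ ∑ _j ∈ Finset.range m, ζ :=
        Finset.sum_le_sum (fun j _ => phiOmega_le hp hω (good_iter hp hx j))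
    _ = m * ζ := by simp [mul_comm]

lemma phiOmegaSum_Rseq {p ζ : ℕ} {ω : ℕ → ℕ} {x : ℕ → ℕ} (hp : 3 ≤ p)
    (hω : Antipalindromic p ζ ω) (hx : Good p x) (m : ℕ) :
    phiOmegaSum p ω m (Rseq p ((odo p)^[m] x)) + phiOmegaSum p ω m x = m * ζ := by
  unfold phiOmegaSum
  have hrefl : ∑ j ∈ Finset.range m, phiOmega p ω ((odo p)^[j] x)
      = ∑ j ∈ Finset.range m, phiOmega p ω ((odo p)^[m - 1 - j] x) :=
    (Finset.sum_range_reflect (fun j => phiOmega p ω ((odo p)^[j] x)) m).symm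
  rw [hrefl, ← Finset.sum_add_distrib]
  have hterm : ∀ j ∈ Finset.range m,
      phiOmega p ω ((odo p)^[j] (Rseq p ((odo p)^[m] x)))
        + phiOmega p ω ((odo p)^[m - 1 - j] x) = ζ := by
    intro j hj
    rw [Finset.mem_range] at hj
    have h1 : (odo p)^[m] x = (odo p)^[j] ((odo p)^[m - j] x) := by
      rw [← Function.iterate_add_apply]
      congr 1
      omega
    have h2 : (odo p)^[m - j] x = odo p ((odo p)^[m - 1 - j] x) := by
      rw [← Function.iterate_succ_apply' (odo p) (m - 1 - j) x]
      congr 1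
      omega
    rw [h1, iter_odo_Rseq hp j _ (good_iter hp hx (m - j)), h2]
    exact phiOmega_Rseq_odo hp hω (good_iter hp hx (m - 1 - j))
  rw [Finset.sum_congr rfl hterm]
  simp [mul_comm]



-- mod helpers
lemma mod_eq_of_window {p Q N r : ℕ} (hr : r < p) (hN : N = p * Q + r) : N % p = r := by
  subst hN
  rw [Nat.mul_add_mod, Nat.mod_eq_of_lt hr]

lemma mul_pred_add (p a : ℕ) (ha : 1 ≤ a) : p * (a - 1) + p = p * a := by
  have h : a - 1 + 1 = a := by omega
  calc p * (a - 1) + p = p * (a - 1 + 1) := by ring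
    _ = p * a := by rw [h]

lemma pow_pred_mod {p k : ℕ} (hp : 2 ≤ p) : (p ^ (k + 1) - 1) % p = p - 1 := by
  have h1 : 1 ≤ p ^ k := Nat.one_le_pow _ _ (by omega)
  have h2 := mul_pred_add p (p ^ k) h1
  have hpow : p ^ (k + 1) = p * p ^ k := by rw [pow_succ, mul_comm]
  exact mod_eq_of_window (Q := p ^ k - 1) (by omega) (by omega)

lemma mod_compl {p k N : ℕ} (hp : 2 ≤ p) (hN : N < p ^ (k + 1)) :
    (p ^ (k + 1) - 1 - N) % p = p - 1 - N % p := by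
  have hdm := Nat.div_add_mod N p
  set q := N / p with hq
  set r := N % p with hr
  have hrlt : r < p := Nat.mod_lt _ (by omega)
  have hpow : p ^ (k + 1) = p * p ^ k := by rw [pow_succ, mul_comm]
  have hqlt : q < p ^ k := by
    by_contra h
    push_neg at h
    have : p * p ^ k ≤ p * q := Nat.mul_le_mul_left _ h
    omega
  have hD : p * (p ^ k - q - 1) + p * q + p = p * p ^ k := by
    have : (p ^ k - q - 1) + q + 1 = p ^ k := by omega
    calc p * (p ^ k - q - 1) + p * q + p = p * ((p ^ k - q - 1) + q + 1) := by ring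
      _ = p * p ^ k := by rw [this]
  exact mod_eq_of_window (Q := p ^ k - q - 1) (by omega) (by omega)

lemma mod_add_pow {p N a : ℕ} : (N + p ^ (a + 1)) % p = N % p := by
  have h1 : N + p ^ (a + 1) = N + p ^ a * p := by ring
  rw [h1, Nat.add_mul_mod_self_right]



lemma digitsOf_eq_of {p : ℕ} {u : ℝ} {j n : ℕ}
    (h1 : (n : ℝ) ≤ u * (p : ℝ) ^ (j + 1)) (h2 : u * (p : ℝ) ^ (j + 1) < n + 1) :
    digitsOf p u j = n % p := by
  unfold digitsOf
  have hfl : ⌊u * (p : ℝ) ^ (j + 1)⌋ = (n : ℤ) := by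
    rw [Int.floor_eq_iff]
    constructor
    · exact_mod_cast h1
    · push_cast
      exact h2
  rw [hfl, Int.toNat_natCast]

def Aset (p i : ℕ) : Set ℝ := Set.Ico (1 - ((p : ℝ) ^ i)⁻¹) (1 - ((p : ℝ) ^ (i + 1))⁻¹)
def Bset (p i : ℕ) : Set ℝ := Set.Ico (((p : ℝ) ^ (i + 1))⁻¹) (((p : ℝ) ^ i)⁻¹)

section
variable {p : ℕ} (hp : 3 ≤ p)
include hp

lemma hp1 : (1 : ℝ) < (p : ℝ) := by exact_mod_cast (by omega : 1 < p)

lemma pow_inv_le {a b : ℕ} (h : a ≤ b) : ((p : ℝ) ^ b)⁻¹ ≤ ((p : ℝ) ^ a)⁻¹ := by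
  have h1 := hp1 hp
  apply inv_anti₀ (by positivity)
  exact pow_le_pow_right₀ (le_of_lt h1) h

lemma Aset_subset : Aset p i ⊆ Set.Ico (0 : ℝ) 1 := by
  intro u hu
  obtain ⟨h1, h2⟩ := hu
  have h3 : ((p : ℝ) ^ i)⁻¹ ≤ 1 := by
    have := pow_inv_le hp (Nat.zero_le i)
    simpa using this
  have h4 : (0 : ℝ) < ((p : ℝ) ^ (i + 1))⁻¹ := by
    have h1 := hp1 hp; positivity
  constructor <;> [linarith; linarith]

-- digits of u ∈ Aset p i below i are p-1
lemma Aset_digit_lt {u : ℝ} {i j : ℕ} (hu : u ∈ Aset p i) (hj : j < i) :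
    digitsOf p u j = p - 1 := by
  have h1 := hp1 hp
  obtain ⟨hl, hr⟩ := hu
  have hq : (0:ℝ) < (p:ℝ) ^ (j+1) := by positivity
  have key : ((p ^ (j + 1) - 1 : ℕ) : ℝ) ≤ u * (p:ℝ) ^ (j+1) ∧
      u * (p:ℝ) ^ (j+1) < ((p ^ (j + 1) - 1 : ℕ) : ℝ) + 1 := by
    have hcast : ((p ^ (j + 1) - 1 : ℕ) : ℝ) = (p:ℝ) ^ (j+1) - 1 := by
      have : 1 ≤ p ^ (j + 1) := Nat.one_le_pow _ _ (by omega)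
      push_cast [Nat.cast_sub this]
      ring
    rw [hcast]
    constructor
    · -- (p^{j+1}) - 1 ≤ u p^{j+1}  ⟸  u ≥ 1 - p^{-i} and p^{j+1} * p^{-i} ≤ 1
      have hmul : (1 - ((p : ℝ) ^ i)⁻¹) * (p:ℝ)^(j+1) ≤ u * (p:ℝ)^(j+1) :=
        mul_le_mul_of_nonneg_right hl (le_of_lt hq)
      have hfrac : (p:ℝ)^(j+1) * ((p : ℝ) ^ i)⁻¹ ≤ 1 := by
        rw [← div_eq_mul_inv, div_le_one (by positivity)]
        exact pow_le_pow_right₀ (le_of_lt h1) (by omega)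
      nlinarith
    · have hmul : u * (p:ℝ)^(j+1) < (1 - ((p : ℝ) ^ (i+1))⁻¹) * (p:ℝ)^(j+1) :=
        mul_lt_mul_of_pos_right hr hq
      have hfrac : (0:ℝ) < (p:ℝ)^(j+1) * ((p : ℝ) ^ (i+1))⁻¹ := by positivity
      nlinarith
  rw [digitsOf_eq_of key.1 key.2]
  have h2 : 1 ≤ p ^ j := Nat.one_le_pow _ _ (by omega)
  have h3 : p ^ (j + 1) = p * p ^ j := by rw [pow_succ, mul_comm]
  have h4 : p * (p ^ j - 1) + p = p * p ^ j := by
    have h : p ^ j - 1 + 1 = p ^ j := by omega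
    calc p * (p ^ j - 1) + p = p * (p ^ j - 1 + 1) := by ring
      _ = p * p ^ j := by rw [h]
  have := mod_eq_of_window (p := p) (Q := p ^ j - 1) (N := p ^ (j+1) - 1) (r := p - 1)
    (by omega) (by omega)
  exact this

end

section
variable {p : ℕ} (hp : 3 ≤ p)
include hp

lemma cast_pow_sub_p {i : ℕ} : ((p ^ (i + 1) - p : ℕ) : ℝ) = (p : ℝ) ^ (i + 1) - p := by
  have h : p ≤ p ^ (i + 1) := Nat.le_self_pow (by omega) p
  push_cast [Nat.cast_sub h]
  ring

lemma Aset_digit_i {u : ℝ} {i : ℕ} (hu : u ∈ Aset p i) :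
    digitsOf p u i ≤ p - 2 ∧
      (digitsOf p u i : ℝ) + ((p : ℝ) ^ (i + 1) - p) ≤ u * (p : ℝ) ^ (i + 1) ∧
      u * (p : ℝ) ^ (i + 1) < (digitsOf p u i : ℝ) + ((p : ℝ) ^ (i + 1) - p) + 1 := by
  have h1 := hp1 hp
  obtain ⟨hl, hr⟩ := hu
  have hq : (0 : ℝ) < (p : ℝ) ^ (i + 1) := by positivity
  have e1 : (p : ℝ) ^ (i + 1) * ((p : ℝ) ^ i)⁻¹ = p := by
    rw [pow_succ, mul_comm ((p:ℝ)^i)]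
    field_simp
  have e2 : (p : ℝ) ^ (i + 1) * ((p : ℝ) ^ (i + 1))⁻¹ = 1 :=
    mul_inv_cancel₀ (by positivity)
  have hlo : (p : ℝ) ^ (i + 1) - p ≤ u * (p : ℝ) ^ (i + 1) := by
    have := mul_le_mul_of_nonneg_right hl (le_of_lt hq)
    nlinarith
  have hhi : u * (p : ℝ) ^ (i + 1) < (p : ℝ) ^ (i + 1) - 1 := by
    have := mul_lt_mul_of_pos_right hr hq
    nlinarith
  set N := ⌊u * (p : ℝ) ^ (i + 1)⌋ with hN
  have hN0 : 0 ≤ N := by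
    apply Int.le_floor.mpr
    have hpow : (p:ℝ) ≤ (p:ℝ)^(i+1) := by
      calc (p:ℝ) = (p:ℝ)^1 := (pow_one _).symm
      _ ≤ (p:ℝ)^(i+1) := pow_le_pow_right₀ (le_of_lt h1) (by omega)
    push_cast
    linarith
  set n := N.toNat with hn
  have hcast : (n : ℝ) = (N : ℝ) := by
    rw [hn]; exact_mod_cast congrArg Int.cast (Int.toNat_of_nonneg hN0)
  have hfl : (n : ℝ) ≤ u * (p : ℝ) ^ (i + 1) := by
    rw [hcast]; exact Int.floor_le _
  have hfu : u * (p : ℝ) ^ (i + 1) < (n : ℝ) + 1 := by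
    rw [hcast]; exact Int.lt_floor_add_one _
  -- ℕ bounds on n
  have hnlo : p ^ (i + 1) - p ≤ n := by
    have : ((p ^ (i + 1) - p : ℕ) : ℝ) < (n : ℝ) + 1 := by
      rw [cast_pow_sub_p hp]; linarith
    exact_mod_cast (by exact_mod_cast Nat.lt_succ_iff.mp (by exact_mod_cast this) : _)
  have hnhi : n ≤ p ^ (i + 1) - 2 := by
    have hple : p ≤ p ^ (i + 1) := Nat.le_self_pow (by omega) p
    have : (n : ℝ) < ((p ^ (i + 1) : ℕ) : ℝ) - 1 := by push_cast; linarith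
    have h2 : (n : ℝ) + 1 < ((p ^ (i + 1) : ℕ) : ℝ) := by linarith
    have h3 : n + 1 < p ^ (i + 1) := by exact_mod_cast h2
    omega
  -- digit identity
  have hdig : digitsOf p u i = n % p := by
    unfold digitsOf
    rfl
  have hple : p ≤ p ^ (i + 1) := Nat.le_self_pow (by omega) p
  have hmod : n % p = n - (p ^ (i + 1) - p) := by
    have h2 : 1 ≤ p ^ i := Nat.one_le_pow _ _ (by omega)
    have h4 := mul_pred_add p (p ^ i) h2
    have hpow : p ^ (i + 1) = p * p ^ i := by rw [pow_succ, mul_comm]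
    exact mod_eq_of_window (Q := p ^ i - 1) (by omega) (by omega)
  refine ⟨by omega, ?_, ?_⟩
  · have : ((digitsOf p u i : ℕ) : ℝ) = (n : ℝ) - ((p ^ (i + 1) - p : ℕ) : ℝ) := by
      rw [hdig, hmod]
      have : n - (p ^ (i + 1) - p) + (p ^ (i + 1) - p) = n := by omega
      push_cast [Nat.cast_sub (by omega : p ^ (i + 1) - p ≤ n)]
      ring
    rw [this, cast_pow_sub_p hp]
    linarith
  · have : ((digitsOf p u i : ℕ) : ℝ) = (n : ℝ) - ((p ^ (i + 1) - p : ℕ) : ℝ) := by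
      rw [hdig, hmod]
      push_cast [Nat.cast_sub (by omega : p ^ (i + 1) - p ≤ n)]
      ring
    rw [this, cast_pow_sub_p hp]
    linarith

lemma Aset_firstNot {u : ℝ} {i : ℕ} (hu : u ∈ Aset p i) :
    firstNot p (digitsOf p u) = i := by
  apply firstNot_eq_of
  · have := (Aset_digit_i hp hu).1
    omega
  · intro j hj
    exact Aset_digit_lt hp hu hj

end

/-- the odometer on `[0,1)`, conjugate to `odo` via `digitsOf`. -/
noncomputable def sMap (p : ℕ) (u : ℝ) : ℝ :=
  u + (((p : ℝ) ^ firstNot p (digitsOf p u))⁻¹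
    + ((p : ℝ) ^ (firstNot p (digitsOf p u) + 1))⁻¹ - 1)

section
variable {p : ℕ} (hp : 3 ≤ p)
include hp

lemma sMap_mem_Bset {u : ℝ} {i : ℕ} (hu : u ∈ Aset p i) :
    sMap p u = u + (((p : ℝ) ^ i)⁻¹ + ((p : ℝ) ^ (i + 1))⁻¹ - 1) ∧
      sMap p u ∈ Bset p i := by
  have hfn := Aset_firstNot hp hu
  have hval : sMap p u = u + (((p : ℝ) ^ i)⁻¹ + ((p : ℝ) ^ (i + 1))⁻¹ - 1) := by
    unfold sMap; rw [hfn]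
  obtain ⟨hl, hr⟩ := hu
  refine ⟨hval, ?_, ?_⟩ <;> rw [hval] <;> [linarith; linarith]

lemma Bset_subset : Bset p i ⊆ Set.Ico (0 : ℝ) 1 := by
  intro u hu
  obtain ⟨h1, h2⟩ := hu
  have h3 : ((p : ℝ) ^ i)⁻¹ ≤ 1 := by
    have := pow_inv_le hp (Nat.zero_le i)
    simpa using this
  have h4 : (0 : ℝ) < ((p : ℝ) ^ (i + 1))⁻¹ := by
    have := hp1 hp; positivity
  constructor <;> linarith

lemma sMap_digits {u : ℝ} {i : ℕ} (hu : u ∈ Aset p i) :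
    digitsOf p (sMap p u) = odo p (digitsOf p u) := by
  have h1 := hp1 hp
  have hfn := Aset_firstNot hp hu
  obtain ⟨hval, hB⟩ := sMap_mem_Bset hp hu
  obtain ⟨hBl, hBr⟩ := hB
  have hu0 : 0 ≤ u := (Aset_subset hp hu).1
  set v := sMap p u with hv
  funext j
  rcases lt_trichotomy j i with hj | hj | hj
  · -- small digits: 0
    have hq : (0 : ℝ) < (p : ℝ) ^ (j + 1) := by positivity
    have hp0 : (0 : ℝ) ≤ v := le_trans (by positivity) hBl
    have hlt : v * (p : ℝ) ^ (j + 1) < 1 := by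
      have hpij : (p : ℝ) ^ (j + 1) ≤ (p : ℝ) ^ i := pow_le_pow_right₀ (le_of_lt h1) (by omega)
      have h2 : v * (p : ℝ) ^ (j + 1) < ((p : ℝ) ^ i)⁻¹ * (p : ℝ) ^ i := by
        apply lt_of_lt_of_le (b := ((p : ℝ) ^ i)⁻¹ * (p : ℝ) ^ (j + 1))
        · exact mul_lt_mul_of_pos_right hBr hq
        · exact mul_le_mul_of_nonneg_left hpij (by positivity)
      rwa [inv_mul_cancel₀ (by positivity)] at h2
    have hd : digitsOf p v j = 0 % p :=
      digitsOf_eq_of (by simpa using mul_nonneg hp0 (le_of_lt hq)) (by push_cast; linarith)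
    rw [hd, Nat.zero_mod, odo_of_lt (by rw [hfn]; exact hj)]
  · -- digit i: +1
    subst hj
    obtain ⟨hc2, hcl, hcu⟩ := Aset_digit_i hp hu
    have e1 : (p : ℝ) ^ (j + 1) * ((p : ℝ) ^ j)⁻¹ = p := by
      rw [pow_succ, mul_comm ((p : ℝ) ^ j)]
      field_simp
    have e2 : (p : ℝ) ^ (j + 1) * ((p : ℝ) ^ (j + 1))⁻¹ = 1 :=
      mul_inv_cancel₀ (by positivity)
    have hvpow : v * (p : ℝ) ^ (j + 1)
        = u * (p : ℝ) ^ (j + 1) + ((p : ℝ) + 1 - (p : ℝ) ^ (j + 1)) := by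
      rw [hval]
      linear_combination e1 + e2
    have hd : digitsOf p v j = (digitsOf p u j + 1) % p := by
      apply digitsOf_eq_of
      · rw [hvpow]; push_cast; linarith
      · rw [hvpow]; push_cast; linarith
    have hodo : odo p (digitsOf p u) j = digitsOf p u j + 1 := by
      rw [← hfn, odo_of_eq, hfn]
    rw [hd, Nat.mod_eq_of_lt (by omega), hodo]
  · -- large digits: unchanged
    obtain ⟨t, ht⟩ : ∃ t, j = i + 1 + t := ⟨j - i - 1, by omega⟩
    subst ht
    set N := (⌊u * (p : ℝ) ^ (i + 1 + t + 1)⌋).toNat with hN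
    have hq : (0 : ℝ) < (p : ℝ) ^ (i + 1 + t + 1) := by positivity
    have hNfl : (N : ℝ) ≤ u * (p : ℝ) ^ (i + 1 + t + 1) ∧
        u * (p : ℝ) ^ (i + 1 + t + 1) < (N : ℝ) + 1 := by
      have h0 : 0 ≤ ⌊u * (p : ℝ) ^ (i + 1 + t + 1)⌋ :=
        Int.floor_nonneg.mpr (mul_nonneg hu0 (le_of_lt hq))
      have hZ : ((N : ℤ)) = ⌊u * (p : ℝ) ^ (i + 1 + t + 1)⌋ := by
        rw [hN]; exact Int.toNat_of_nonneg h0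
      have hcast : (N : ℝ) = (⌊u * (p : ℝ) ^ (i + 1 + t + 1)⌋ : ℝ) := by
        exact_mod_cast congrArg (fun z : ℤ => (z : ℝ)) hZ
      exact ⟨by rw [hcast]; exact Int.floor_le _, by rw [hcast]; exact Int.lt_floor_add_one _⟩
    have e1 : (p : ℝ) ^ (i + 1 + t + 1) * ((p : ℝ) ^ i)⁻¹ = (p : ℝ) ^ (t + 2) := by
      have : (p : ℝ) ^ (i + 1 + t + 1) = (p : ℝ) ^ (t + 2) * (p : ℝ) ^ i := by
        rw [← pow_add]; ring_nf
      rw [this]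
      field_simp
    have e2 : (p : ℝ) ^ (i + 1 + t + 1) * ((p : ℝ) ^ (i + 1))⁻¹ = (p : ℝ) ^ (t + 1) := by
      have : (p : ℝ) ^ (i + 1 + t + 1) = (p : ℝ) ^ (t + 1) * (p : ℝ) ^ (i + 1) := by
        rw [← pow_add]; ring_nf
      rw [this]
      field_simp
    have hvpow : v * (p : ℝ) ^ (i + 1 + t + 1)
        = u * (p : ℝ) ^ (i + 1 + t + 1)
          + ((p : ℝ) ^ (t + 2) + (p : ℝ) ^ (t + 1) - (p : ℝ) ^ (i + 1 + t + 1)) := by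
      rw [hval]
      linear_combination e1 + e2
    have hv0 : (0 : ℝ) ≤ v * (p : ℝ) ^ (i + 1 + t + 1) := by
      have hp0 : (0 : ℝ) ≤ v := le_trans (by positivity) hBl
      positivity
    -- natural window bound
    have hwin : p ^ (i + 1 + t + 1) ≤ N + p ^ (t + 2) + p ^ (t + 1) := by
      have hreal : ((p ^ (i + 1 + t + 1) : ℕ) : ℝ)
          < ((N + p ^ (t + 2) + p ^ (t + 1) : ℕ) : ℝ) + 1 := by
        push_cast
        linarith [hNfl.2, hv0, hvpow.symm.le, hvpow.le]
      have := Nat.lt_succ_iff.mp (by exact_mod_cast hreal)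
      omega
    set n' := N + p ^ (t + 2) + p ^ (t + 1) - p ^ (i + 1 + t + 1) with hn'
    have hcastn' : (n' : ℝ) = (N : ℝ) + (p : ℝ) ^ (t + 2) + (p : ℝ) ^ (t + 1)
        - (p : ℝ) ^ (i + 1 + t + 1) := by
      rw [hn']
      push_cast [Nat.cast_sub hwin]
      ring
    have hd : digitsOf p v (i + 1 + t) = n' % p := by
      apply digitsOf_eq_of
      · rw [hvpow, hcastn']; linarith [hNfl.1]
      · rw [hvpow, hcastn']; linarith [hNfl.2]
    have hmodeq : n' % p = N % p := by
      have key : n' + p ^ (i + 1 + t + 1) = N + p ^ (t + 2) + p ^ (t + 1) := by omega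
      have h1' : n' % p = (n' + p ^ (i + 1 + t + 1)) % p := (mod_add_pow (a := i + 1 + t)).symm
      rw [h1', key, mod_add_pow (a := t), mod_add_pow (a := t + 1)]
    rw [hd, hmodeq, odo_of_gt (by rw [hfn]; omega)]
    rfl

end

section
variable {p : ℕ} (hp : 3 ≤ p)
include hp

lemma exists_Aset {u : ℝ} (hu : u ∈ Set.Ico (0 : ℝ) 1) : ∃ i, u ∈ Aset p i := by
  have h1 := hp1 hp
  obtain ⟨hu0, hu1⟩ := hu
  have ht0 : 0 < 1 - u := by linarith
  have hex : ∃ n, ((p : ℝ) ^ n)⁻¹ < 1 - u := by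
    obtain ⟨n, hn⟩ := pow_unbounded_of_one_lt (1 - u)⁻¹ h1
    exact ⟨n, by rwa [inv_lt_comm₀ ht0 (by positivity)] at hn⟩
  classical
  set k := Nat.find hex with hk
  have hspec := Nat.find_spec hex
  have hk0 : k ≠ 0 := by
    intro h
    rw [hk] at h
    have := Nat.find_spec hex
    rw [h] at this
    simp at this
    linarith
  refine ⟨k - 1, ?_, ?_⟩
  · have hmin : ¬ ((p : ℝ) ^ (k - 1))⁻¹ < 1 - u := Nat.find_min hex (by omega)
    push_neg at hmin
    linarith
  · have : ((p : ℝ) ^ (k - 1 + 1))⁻¹ < 1 - u := by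
      have : k - 1 + 1 = k := by omega
      rw [this]
      exact hspec
    linarith

lemma exists_Bset {u : ℝ} (hu : u ∈ Set.Ioo (0 : ℝ) 1) : ∃ i, u ∈ Bset p i := by
  have h1 := hp1 hp
  obtain ⟨hu0, hu1⟩ := hu
  have hex : ∃ n, ((p : ℝ) ^ n)⁻¹ ≤ u := by
    obtain ⟨n, hn⟩ := pow_unbounded_of_one_lt u⁻¹ h1
    exact ⟨n, le_of_lt (by rwa [inv_lt_comm₀ hu0 (by positivity)] at hn)⟩
  classical
  set k := Nat.find hex with hk
  have hspec := Nat.find_spec hex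
  have hk0 : k ≠ 0 := by
    intro h
    rw [hk] at h
    have := Nat.find_spec hex
    rw [h] at this
    simp at this
    linarith
  refine ⟨k - 1, ?_, ?_⟩
  · have : k - 1 + 1 = k := by omega
    rw [this]
    exact hspec
  · have hmin : ¬ ((p : ℝ) ^ (k - 1))⁻¹ ≤ u := Nat.find_min hex (by omega)
    push_neg at hmin
    exact hmin

lemma digitsOf_lt' (u : ℝ) (i : ℕ) : digitsOf p u i < p :=
  Nat.mod_lt _ (by omega)

lemma digitsOf_shift {u : ℝ} (hu : 0 ≤ u) (n t : ℕ) :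
    digitsOf p u (n + t) = digitsOf p (Int.fract (u * (p : ℝ) ^ n)) t := by
  have h1 := hp1 hp
  set f := Int.fract (u * (p : ℝ) ^ n) with hf
  have hf0 : 0 ≤ f := Int.fract_nonneg _
  set M := (⌊u * (p : ℝ) ^ n⌋).toNat with hM
  have hMz : ((M : ℤ)) = ⌊u * (p : ℝ) ^ n⌋ :=
    Int.toNat_of_nonneg (Int.floor_nonneg.mpr (by positivity))
  have hMf : u * (p : ℝ) ^ n = M + f := by
    have h := Int.floor_add_fract (u * (p : ℝ) ^ n)
    rw [hf]
    have : ((M : ℤ) : ℝ) = (⌊u * (p : ℝ) ^ n⌋ : ℝ) := congrArg (fun z : ℤ => (z : ℝ)) hMz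
    push_cast at this ⊢
    linarith
  set N := (⌊f * (p : ℝ) ^ (t + 1)⌋).toNat with hN
  have hNz : ((N : ℤ)) = ⌊f * (p : ℝ) ^ (t + 1)⌋ :=
    Int.toNat_of_nonneg (Int.floor_nonneg.mpr (by positivity))
  have hNcast : (N : ℝ) = (⌊f * (p : ℝ) ^ (t + 1)⌋ : ℝ) := by
    exact_mod_cast congrArg (fun z : ℤ => (z : ℝ)) hNz
  have hNle : (N : ℝ) ≤ f * (p : ℝ) ^ (t + 1) := by rw [hNcast]; exact Int.floor_le _
  have hNlt : f * (p : ℝ) ^ (t + 1) < (N : ℝ) + 1 := by rw [hNcast]; exact Int.lt_floor_add_one _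
  have hpowadd : (p : ℝ) ^ (n + t + 1) = (p : ℝ) ^ n * (p : ℝ) ^ (t + 1) := by
    rw [← pow_add]; ring_nf
  have key : digitsOf p u (n + t) = (M * p ^ (t + 1) + N) % p := by
    apply digitsOf_eq_of
    · push_cast
      rw [hpowadd, ← mul_assoc, hMf]
      nlinarith [hNle]
    · push_cast
      rw [hpowadd, ← mul_assoc, hMf]
      nlinarith [hNlt]
  rw [key]
  have hsplit : M * p ^ (t + 1) + N = p * (M * p ^ t) + N := by ring
  rw [hsplit, Nat.mul_add_mod]
  rfl

lemma good_digitsOf {u : ℝ} (hu : u ∈ Set.Ico (0 : ℝ) 1) : Good p (digitsOf p u) := by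
  refine ⟨fun j => digitsOf_lt' hp u j, fun n => ?_⟩
  have hf : Int.fract (u * (p : ℝ) ^ n) ∈ Set.Ico (0 : ℝ) 1 :=
    ⟨Int.fract_nonneg _, Int.fract_lt_one _⟩
  obtain ⟨i, hi⟩ := exists_Aset hp hf
  refine ⟨n + i, by omega, ?_⟩
  rw [digitsOf_shift hp hu.1 n i]
  have := (Aset_digit_i hp hi).1
  omega

end

/-- `u` is not a `p`-adic rational. -/
def NPred (p : ℕ) (u : ℝ) : Prop := ∀ (k : ℕ) (z : ℤ), u * (p : ℝ) ^ (k + 1) ≠ (z : ℝ)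

section
variable {p : ℕ} (hp : 3 ≤ p)
include hp

lemma NPred_shift {u : ℝ} (h : NPred p u) (a : ℤ) (N : ℕ) :
    NPred p (u + (a : ℝ) / (p : ℝ) ^ (N + 1)) := by
  intro k z hz
  have h1 := hp1 hp
  have hP : ((p : ℝ) ^ (N + 1)) ≠ 0 := by positivity
  apply h (k + N + 1) (z * (p : ℤ) ^ (N + 1) - a * (p : ℤ) ^ (k + 1))
  have e : ((u + (a : ℝ) / (p : ℝ) ^ (N + 1)) * (p : ℝ) ^ (k + 1)) * (p : ℝ) ^ (N + 1)
      = (z : ℝ) * (p : ℝ) ^ (N + 1) := by rw [hz]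
  have e2 : ((u + (a : ℝ) / (p : ℝ) ^ (N + 1)) * (p : ℝ) ^ (k + 1)) * (p : ℝ) ^ (N + 1)
      = u * ((p : ℝ) ^ (k + 1) * (p : ℝ) ^ (N + 1)) + (a : ℝ) * (p : ℝ) ^ (k + 1) := by
    field_simp
  have e3 : (p : ℝ) ^ (k + 1) * (p : ℝ) ^ (N + 1) = (p : ℝ) ^ (k + N + 1 + 1) := by
    rw [← pow_add]; ring_nf
  push_cast
  rw [← e3]
  linarith [e, e2]

lemma NPred_ne_zero {u : ℝ} (h : NPred p u) : u ≠ 0 := by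
  intro h0
  exact h 0 0 (by rw [h0]; simp)

lemma digits_one_sub {v : ℝ} (hv : v ∈ Set.Ioo (0 : ℝ) 1) (hNP : NPred p v) :
    digitsOf p (1 - v) = Rseq p (digitsOf p v) := by
  have h1 := hp1 hp
  obtain ⟨hv0, hv1⟩ := hv
  funext j
  set w := v * (p : ℝ) ^ (j + 1) with hw
  have hq : (0 : ℝ) < (p : ℝ) ^ (j + 1) := by positivity
  have hw0 : 0 < w := by positivity
  have hw1 : w < (p : ℝ) ^ (j + 1) := by
    rw [hw]
    nlinarith
  set N := (⌊w⌋).toNat with hN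
  have hNz : ((N : ℤ)) = ⌊w⌋ := Int.toNat_of_nonneg (Int.floor_nonneg.mpr (le_of_lt hw0))
  have hNcast : (N : ℝ) = (⌊w⌋ : ℝ) := by
    exact_mod_cast congrArg (fun z : ℤ => (z : ℝ)) hNz
  have hNle : (N : ℝ) ≤ w := by rw [hNcast]; exact Int.floor_le _
  have hNlt2 : w < (N : ℝ) + 1 := by rw [hNcast]; exact Int.lt_floor_add_one _
  have hne : w ≠ (N : ℝ) := by
    have hh := hNP j (N : ℤ)
    intro hc
    apply hh
    rw [← hw, hc]
    push_cast
    ring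
  have hNw : (N : ℝ) < w := lt_of_le_of_ne hNle (Ne.symm hne)
  have hNlt : N < p ^ (j + 1) := by
    have : (N : ℝ) < ((p ^ (j + 1) : ℕ) : ℝ) := by push_cast; linarith
    exact_mod_cast this
  set n' := p ^ (j + 1) - 1 - N with hn'
  have hcastn' : (n' : ℝ) = ((p : ℝ) ^ (j + 1)) - 1 - N := by
    have h2 : n' = p ^ (j + 1) - (1 + N) := by omega
    rw [h2]
    push_cast [Nat.cast_sub (by omega : 1 + N ≤ p ^ (j + 1))]
    ring
  have hrefl : (1 - v) * (p : ℝ) ^ (j + 1) = (p : ℝ) ^ (j + 1) - w := by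
    rw [hw]; ring
  have hd : digitsOf p (1 - v) j = n' % p := by
    apply digitsOf_eq_of
    · rw [hcastn', hrefl]
      linarith
    · rw [hcastn', hrefl]
      push_cast
      linarith
  rw [hd, mod_compl (by omega) hNlt]
  show p - 1 - N % p = Rseq p (digitsOf p v) j
  unfold Rseq digitsOf
  rw [hN, hw]

end

section Meas

lemma measurableSet_nat' {δ : Type*} [MeasurableSpace δ] {f : δ → ℕ} (hf : Measurable f)
    (s : Set ℕ) : MeasurableSet (f ⁻¹' s) :=
  hf ((Set.to_countable s).measurableSet)

variable {p : ℕ}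

lemma measurable_digitsOf : Measurable (digitsOf p) := by
  apply measurable_pi_lambda
  intro i
  exact (measurable_of_countable (fun z : ℤ => z.toNat % p)).comp
    (Int.measurable_floor.comp (measurable_id.mul_const _))

lemma measurable_firstNot : Measurable (firstNot p) := by
  apply measurable_to_countable'
  intro n
  have hset : firstNot p ⁻¹' {n} =
      ({x : ℕ → ℕ | x n ≠ p - 1} ∩ ⋂ (j : ℕ), {x | j < n → x j = p - 1})
        ∪ ({x : ℕ → ℕ | ∀ j, x j = p - 1} ∩ {x : ℕ → ℕ | n = 0}) := by
    ext x
    simp only [Set.mem_preimage, Set.mem_singleton_iff, Set.mem_union, Set.mem_inter_iff,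
      Set.mem_iInter, Set.mem_setOf_eq]
    constructor
    · intro h
      by_cases hex : ∃ j, x j ≠ p - 1
      · left
        obtain ⟨j0, hj0⟩ := hex
        have hmem : x (firstNot p x) ≠ p - 1 :=
          Nat.sInf_mem (s := {i | x i ≠ p - 1}) ⟨j0, hj0⟩
        rw [h] at hmem
        exact ⟨hmem, fun j hj => firstNot_lt_eq (by omega : j < firstNot p x)⟩
      · right
        push_neg at hex
        have hempty : {i | x i ≠ p - 1} = (∅ : Set ℕ) := by
          ext j; simp [hex j]
        have h0 : firstNot p x = 0 := by
          unfold firstNot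
          rw [hempty, Nat.sInf_empty]
        exact ⟨hex, by omega⟩
    · rintro (⟨h1, h2⟩ | ⟨h1, h2⟩)
      · exact firstNot_eq_of x h1 (fun j hj => h2 j hj)
      · have hempty : {i | x i ≠ p - 1} = (∅ : Set ℕ) := by
          ext j; simp [h1 j]
        have h0 : firstNot p x = 0 := by
          unfold firstNot
          rw [hempty, Nat.sInf_empty]
        omega
  rw [hset]
  apply MeasurableSet.union
  · apply MeasurableSet.inter
    · exact (measurableSet_nat' (measurable_pi_apply n) {p - 1}).compl
    · apply MeasurableSet.iInter
      intro j
      by_cases hj : j < n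
      · have : {x : ℕ → ℕ | j < n → x j = p - 1} = {x : ℕ → ℕ | x j = p - 1} := by
          ext x; simp [hj]
        rw [this]
        exact measurableSet_nat' (measurable_pi_apply j) {p - 1}
      · have : {x : ℕ → ℕ | j < n → x j = p - 1} = Set.univ := by
          ext x; simp [hj]
        rw [this]
        exact MeasurableSet.univ
  · apply MeasurableSet.inter
    · have : {x : ℕ → ℕ | ∀ j, x j = p - 1} = ⋂ j, {x : ℕ → ℕ | x j = p - 1} := by
        ext x; simp
      rw [this]
      exact MeasurableSet.iInter (fun j => measurableSet_nat' (measurable_pi_apply j) {p - 1})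
    · by_cases hn : n = 0
      · have : {x : ℕ → ℕ | n = 0} = Set.univ := by ext x; simp [hn]
        rw [this]; exact MeasurableSet.univ
      · have : {x : ℕ → ℕ | n = 0} = ∅ := by ext x; simp [hn]
        rw [this]; exact MeasurableSet.empty

lemma measurable_eval_firstNot : Measurable (fun x : ℕ → ℕ => x (firstNot p x)) := by
  apply measurable_to_countable'
  intro v
  have hset : (fun x : ℕ → ℕ => x (firstNot p x)) ⁻¹' {v}
      = ⋃ n, (firstNot p ⁻¹' {n}) ∩ {x : ℕ → ℕ | x n = v} := by
    ext x
    simp only [Set.mem_preimage, Set.mem_singleton_iff, Set.mem_iUnion, Set.mem_inter_iff,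
      Set.mem_setOf_eq]
    constructor
    · intro h
      exact ⟨firstNot p x, rfl, h⟩
    · rintro ⟨n, h1, h2⟩
      rw [h1]; exact h2
  rw [hset]
  exact MeasurableSet.iUnion (fun n =>
    (measurableSet_nat' measurable_firstNot {n}).inter
      (measurableSet_nat' (measurable_pi_apply n) {v}))

lemma measurable_phiOmega (ω : ℕ → ℕ) : Measurable (phiOmega p ω) :=
  (measurable_of_countable ω).comp measurable_eval_firstNot

lemma measurable_odo : Measurable (odo p) := by
  apply measurable_pi_lambda
  intro i
  unfold odo
  apply Measurable.ite
  · exact measurableSet_nat' measurable_firstNot {n | i < n}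
  · exact measurable_const
  · apply Measurable.ite
    · exact measurableSet_nat' measurable_firstNot {n | i = n}
    · exact (measurable_of_countable (fun k : ℕ => k + 1)).comp (measurable_pi_apply i)
    · exact measurable_pi_apply i

lemma measurable_iter_odo (k : ℕ) : Measurable ((odo p)^[k]) := by
  induction k with
  | zero => simpa using measurable_id
  | succ k ih =>
    rw [Function.iterate_succ]
    exact ih.comp measurable_odo

lemma measurable_phiOmegaSum (ω : ℕ → ℕ) (m : ℕ) : Measurable (phiOmegaSum p ω m) := by
  unfold phiOmegaSum
  induction m with
  | zero => simpa using measurable_const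
  | succ m ih =>
    have : (fun x => ∑ j ∈ Finset.range (m + 1), phiOmega p ω ((odo p)^[j] x))
        = fun x => (∑ j ∈ Finset.range m, phiOmega p ω ((odo p)^[j] x))
          + phiOmega p ω ((odo p)^[m] x) := by
      funext x
      rw [Finset.sum_range_succ]
    rw [this]
    exact (measurable_of_countable (fun q : ℕ × ℕ => q.1 + q.2)).comp
      (ih.prodMk ((measurable_phiOmega ω).comp (measurable_iter_odo m)))

lemma measurable_sMap : Measurable (sMap p) := by
  unfold sMap
  exact measurable_id.add ((measurable_of_countable
    (fun i : ℕ => ((p : ℝ) ^ i)⁻¹ + ((p : ℝ) ^ (i + 1))⁻¹ - 1)).comp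
    (measurable_firstNot.comp measurable_digitsOf))

end Meas

section MeasurePres

lemma vol_eq_of_diff {s t z : Set ℝ} (h1 : s ⊆ t ∪ z) (h2 : t ⊆ s ∪ z)
    (hz : volume z = 0) : volume s = volume t := by
  apply le_antisymm
  · calc volume s ≤ volume (t ∪ z) := measure_mono h1
      _ ≤ volume t + volume z := measure_union_le _ _
      _ = volume t := by rw [hz, add_zero]
  · calc volume t ≤ volume (s ∪ z) := measure_mono h2
      _ ≤ volume s + volume z := measure_union_le _ _
      _ = volume s := by rw [hz, add_zero]

section
variable {p : ℕ} (hp : 3 ≤ p)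
include hp

lemma Aset_disjoint : Pairwise (Function.onFun Disjoint (Aset p)) := by
  have key : ∀ i j : ℕ, i < j → Disjoint (Aset p i) (Aset p j) := by
    intro i j hij
    rw [Set.disjoint_left]
    intro u hui huj
    have h1 : ((p : ℝ) ^ j)⁻¹ ≤ ((p : ℝ) ^ (i + 1))⁻¹ := pow_inv_le hp (by omega)
    have := hui.2
    have := huj.1
    simp only [Aset, Set.mem_Ico] at *
    linarith
  intro i j hij
  rcases lt_or_gt_of_ne hij with h | h
  · exact key i j h
  · exact (key j i h).symm

lemma Bset_disjoint : Pairwise (Function.onFun Disjoint (Bset p)) := by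
  have key : ∀ i j : ℕ, i < j → Disjoint (Bset p i) (Bset p j) := by
    intro i j hij
    rw [Set.disjoint_left]
    intro u hui huj
    have h1 : ((p : ℝ) ^ j)⁻¹ ≤ ((p : ℝ) ^ (i + 1))⁻¹ := pow_inv_le hp (by omega)
    have := hui.1
    have := huj.2
    simp only [Bset, Set.mem_Ico] at *
    linarith
  intro i j hij
  rcases lt_or_gt_of_ne hij with h | h
  · exact key i j h
  · exact (key j i h).symm

lemma Aset_iUnion : (⋃ i, Aset p i) = Set.Ico (0 : ℝ) 1 := by
  apply Set.Subset.antisymm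
  · exact Set.iUnion_subset (fun i => Aset_subset hp)
  · intro u hu
    obtain ⟨i, hi⟩ := exists_Aset hp hu
    exact Set.mem_iUnion.mpr ⟨i, hi⟩

lemma Bset_iUnion : (⋃ i, Bset p i) = Set.Ioo (0 : ℝ) 1 := by
  apply Set.Subset.antisymm
  · apply Set.iUnion_subset
    intro i u hu
    have h1 := hp1 hp
    have h2 := (Bset_subset hp hu).2
    have h3 : (0 : ℝ) < ((p : ℝ) ^ (i + 1))⁻¹ := by positivity
    exact ⟨lt_of_lt_of_le h3 hu.1, h2⟩
  · intro u hu
    obtain ⟨i, hi⟩ := exists_Bset hp hu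
    exact Set.mem_iUnion.mpr ⟨i, hi⟩

open MeasureTheory in
lemma map_sMap_eq :
    Measure.map (sMap p) (volume.restrict (Set.Ico (0 : ℝ) 1))
      = volume.restrict (Set.Ico (0 : ℝ) 1) := by
  apply Measure.ext
  intro s hs
  rw [Measure.map_apply measurable_sMap hs,
    Measure.restrict_apply (measurable_sMap hs),
    Measure.restrict_apply hs]
  have hAB : ∀ i : ℕ, sMap p ⁻¹' s ∩ Aset p i
      = (fun u => u + (((p : ℝ) ^ i)⁻¹ + ((p : ℝ) ^ (i + 1))⁻¹ - 1)) ⁻¹' (s ∩ Bset p i) := by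
    intro i
    ext u
    simp only [Set.mem_inter_iff, Set.mem_preimage]
    constructor
    · rintro ⟨h1, h2⟩
      obtain ⟨hval, hB⟩ := sMap_mem_Bset hp h2
      rw [← hval]
      exact ⟨h1, hB⟩
    · rintro ⟨h1, h2⟩
      have hA : u ∈ Aset p i := by
        obtain ⟨hb1, hb2⟩ := h2
        constructor <;> [linarith; linarith]
      obtain ⟨hval, _⟩ := sMap_mem_Bset hp hA
      rw [hval]
      exact ⟨h1, hA⟩
  calc volume (sMap p ⁻¹' s ∩ Set.Ico 0 1)
      = volume (⋃ i, sMap p ⁻¹' s ∩ Aset p i) := by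
        rw [← Set.inter_iUnion, Aset_iUnion hp]
    _ = ∑' i, volume (sMap p ⁻¹' s ∩ Aset p i) := by
        apply measure_iUnion
        · exact fun i j hij => ((Aset_disjoint hp) hij).mono
            Set.inter_subset_right Set.inter_subset_right
        · exact fun i => (measurable_sMap hs).inter measurableSet_Ico
    _ = ∑' i, volume (s ∩ Bset p i) := by
        congr 1
        funext i
        rw [hAB i, measure_preimage_add_right]
    _ = volume (⋃ i, s ∩ Bset p i) := by
        symm
        apply measure_iUnion
        · exact fun i j hij => ((Bset_disjoint hp) hij).mono
            Set.inter_subset_right Set.inter_subset_right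
        · exact fun i => hs.inter measurableSet_Ico
    _ = volume (s ∩ Set.Ioo 0 1) := by rw [← Set.inter_iUnion, Bset_iUnion hp]
    _ = volume (s ∩ Set.Ico 0 1) := by
        apply vol_eq_of_diff (z := {(0 : ℝ)})
        · rintro u ⟨hus, hu0, hu1⟩
          exact Or.inl ⟨hus, le_of_lt hu0, hu1⟩
        · rintro u ⟨hus, hu0, hu1⟩
          rcases eq_or_lt_of_le hu0 with h | h
          · exact Or.inr (by simp [← h])
          · exact Or.inl ⟨hus, h, hu1⟩
        · exact measure_singleton 0

end
end MeasurePres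

section Refl

open MeasureTheory

lemma vol_preimage_one_sub (X : Set ℝ) :
    volume ((fun v : ℝ => 1 - v) ⁻¹' X) = volume X := by
  have h1 : (fun v : ℝ => 1 - v) ⁻¹' X = Neg.neg ⁻¹' ((fun w : ℝ => w + 1) ⁻¹' X) := by
    ext u
    simp only [Set.mem_preimage]
    constructor <;> intro h <;> [skip; skip] <;>
      · have : -u + 1 = 1 - u := by ring
        simp_all [this]
  rw [h1, Measure.measure_preimage_neg, measure_preimage_add_right]

lemma measurable_one_sub : Measurable (fun v : ℝ => 1 - v) :=
  measurable_const.sub measurable_id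

lemma map_one_sub_eq :
    Measure.map (fun v : ℝ => 1 - v) (volume.restrict (Set.Ico (0 : ℝ) 1))
      = volume.restrict (Set.Ico (0 : ℝ) 1) := by
  apply Measure.ext
  intro s hs
  rw [Measure.map_apply measurable_one_sub hs,
    Measure.restrict_apply (measurable_one_sub hs),
    Measure.restrict_apply hs]
  have h1 : (fun v : ℝ => 1 - v) ⁻¹' s ∩ Set.Ico (0 : ℝ) 1
      = (fun v : ℝ => 1 - v) ⁻¹' (s ∩ Set.Ioc (0 : ℝ) 1) := by
    ext u
    simp only [Set.mem_inter_iff, Set.mem_preimage, Set.mem_Ico, Set.mem_Ioc]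
    constructor
    · rintro ⟨h1, h2, h3⟩
      exact ⟨h1, by linarith, by linarith⟩
    · rintro ⟨h1, h2, h3⟩
      exact ⟨h1, by linarith, by linarith⟩
  rw [h1, vol_preimage_one_sub]
  apply vol_eq_of_diff (z := {(0 : ℝ), 1})
  · rintro u ⟨hus, hu0, hu1⟩
    rcases eq_or_lt_of_le hu1 with h | h
    · exact Or.inr (by simp [h])
    · exact Or.inl ⟨hus, le_of_lt hu0, h⟩
  · rintro u ⟨hus, hu0, hu1⟩
    rcases eq_or_lt_of_le hu0 with h | h
    · exact Or.inr (by simp [← h])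
    · exact Or.inl ⟨hus, h, le_of_lt hu1⟩
  · exact ((Set.finite_singleton (1 : ℝ)).insert 0).measure_zero volume

end Refl

section Final

open MeasureTheory

lemma measurable_iter_sMap {p : ℕ} (k : ℕ) : Measurable ((sMap p)^[k]) := by
  induction k with
  | zero => simpa using measurable_id
  | succ k ih =>
    rw [Function.iterate_succ]
    exact ih.comp measurable_sMap

lemma map_iter_sMap {p : ℕ} (hp : 3 ≤ p) (m : ℕ) :
    Measure.map ((sMap p)^[m]) (volume.restrict (Set.Ico (0 : ℝ) 1))
      = volume.restrict (Set.Ico (0 : ℝ) 1) := by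
  induction m with
  | zero => simpa using Measure.map_id
  | succ k ih =>
    rw [Function.iterate_succ,
      ← Measure.map_map (measurable_iter_sMap k) measurable_sMap,
      map_sMap_eq hp, ih]

lemma badset_null {p : ℕ} (hp : 3 ≤ p) : volume {u : ℝ | ¬ NPred p u} = 0 := by
  have h1 := hp1 hp
  have hsub : {u : ℝ | ¬ NPred p u}
      ⊆ ⋃ (k : ℕ), ⋃ (z : ℤ), {u : ℝ | u * (p : ℝ) ^ (k + 1) = (z : ℝ)} := by
    intro u hu
    unfold NPred at hu
    push_neg at hu
    obtain ⟨k, z, hz⟩ := hu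
    exact Set.mem_iUnion.mpr ⟨k, Set.mem_iUnion.mpr ⟨z, hz⟩⟩
  apply measure_mono_null hsub
  apply measure_iUnion_null
  intro k
  apply measure_iUnion_null
  intro z
  apply measure_mono_null (t := {((z : ℝ) / (p : ℝ) ^ (k + 1))})
  · intro u hu
    have hq : ((p : ℝ) ^ (k + 1)) ≠ 0 := by positivity
    simp only [Set.mem_setOf_eq] at hu
    simp only [Set.mem_singleton_iff]
    field_simp
    linarith [hu]
  · exact measure_singleton _

lemma sMap_iter_props {p : ℕ} (hp : 3 ≤ p) {u : ℝ} (hu : u ∈ Set.Ico (0 : ℝ) 1)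
    (hNP : NPred p u) (k : ℕ) :
    (sMap p)^[k] u ∈ Set.Ico (0 : ℝ) 1 ∧ NPred p ((sMap p)^[k] u) ∧
      digitsOf p ((sMap p)^[k] u) = (odo p)^[k] (digitsOf p u) := by
  induction k with
  | zero => exact ⟨by simpa using hu, by simpa using hNP, by simp⟩
  | succ k ih =>
    obtain ⟨hv1, hv2, hv3⟩ := ih
    set v := (sMap p)^[k] u with hv
    have hstep : (sMap p)^[k + 1] u = sMap p v := Function.iterate_succ_apply' _ _ _
    obtain ⟨i, hA⟩ := exists_Aset hp hv1
    obtain ⟨hval, hB⟩ := sMap_mem_Bset hp hA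
    have hmem : sMap p v ∈ Set.Ico (0 : ℝ) 1 := Bset_subset hp hB
    have ha : (((p : ℤ) + 1 - (p : ℤ) ^ (i + 1) : ℤ) : ℝ) / (p : ℝ) ^ (i + 1)
        = ((p : ℝ) ^ i)⁻¹ + ((p : ℝ) ^ (i + 1))⁻¹ - 1 := by
      have h1 := hp1 hp
      have hne : ((p : ℝ)) ≠ 0 := by positivity
      push_cast
      field_simp
      ring
    have hNP' : NPred p (sMap p v) := by
      rw [hval, ← ha]
      exact NPred_shift hp hv2 _ i
    have hdig : digitsOf p (sMap p v) = (odo p)^[k + 1] (digitsOf p u) := by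
      rw [sMap_digits hp hA, hv3]
      exact (Function.iterate_succ_apply' (odo p) k (digitsOf p u)).symm
    rw [hstep]
    exact ⟨hmem, hNP', hdig⟩

end Final

/-- if `ω` is antipalindromic with range `{0, …, ζ}`, then the
distribution of `φ_ω^(m)` is palindromic: `π_m^ω(j) = π_m^ω(mζ - j)` for
all `m ≥ 0` and all `0 ≤ j ≤ mζ`. -/
theorem statement_2 (p : ℕ) (hp : 3 ≤ p) (ζ : ℕ) (ω : ℕ → ℕ)
    (hω : Antipalindromic p ζ ω) (m j : ℕ) (hj : j ≤ m * ζ) :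
    pimOmega p ω m j = pimOmega p ω m (m * ζ - j) := by
  classical
  have hg : Measurable (digitsOf p) := measurable_digitsOf
  have hAj : ∀ j' : ℕ, MeasurableSet {x : ℕ → ℕ | phiOmegaSum p ω m x = j'} := fun j' =>
    measurableSet_nat' (measurable_phiOmegaSum ω m) {y | y = j'}
  unfold pimOmega lam
  rw [Measure.map_apply hg (hAj j), Measure.map_apply hg (hAj (m * ζ - j))]
  set μ := volume.restrict (Set.Ico (0 : ℝ) 1) with hμ
  set τ := fun u : ℝ => 1 - (sMap p)^[m] u with hτ
  have hmτ : Measurable τ := measurable_one_sub.comp (measurable_iter_sMap m)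
  have hmapτ : Measure.map τ μ = μ := by
    have h1 : τ = (fun v : ℝ => 1 - v) ∘ (sMap p)^[m] := rfl
    rw [h1, ← Measure.map_map measurable_one_sub (measurable_iter_sMap m),
      map_iter_sMap hp, map_one_sub_eq]
  have hE : MeasurableSet (digitsOf p ⁻¹' {x | phiOmegaSum p ω m x = j}) := hg (hAj j)
  have hE' : MeasurableSet (digitsOf p ⁻¹' {x | phiOmegaSum p ω m x = m * ζ - j}) :=
    hg (hAj (m * ζ - j))
  have hpt : ∀ u ∈ Set.Ico (0 : ℝ) 1, NPred p u →
      (phiOmegaSum p ω m (digitsOf p (τ u)) = j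
        ↔ phiOmegaSum p ω m (digitsOf p u) = m * ζ - j) := by
    intro u hu hN
    obtain ⟨hv1, hv2, hv3⟩ := sMap_iter_props hp hu hN m
    set v := (sMap p)^[m] u with hv
    have hv0 : v ≠ 0 := NPred_ne_zero hp hv2
    have hvIoo : v ∈ Set.Ioo (0 : ℝ) 1 := ⟨lt_of_le_of_ne hv1.1 (Ne.symm hv0), hv1.2⟩
    have hdig : digitsOf p (τ u) = Rseq p ((odo p)^[m] (digitsOf p u)) := by
      show digitsOf p (1 - v) = _
      rw [digits_one_sub hp hvIoo hv2, hv3]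
    have hgood : Good p (digitsOf p u) := good_digitsOf hp hu
    have hsum := phiOmegaSum_Rseq hp hω hgood m
    have hle := phiOmegaSum_le hp hω hgood m
    rw [hdig]
    omega
  calc μ (digitsOf p ⁻¹' {x | phiOmegaSum p ω m x = j})
      = (Measure.map τ μ) (digitsOf p ⁻¹' {x | phiOmegaSum p ω m x = j}) := by rw [hmapτ]
    _ = μ (τ ⁻¹' (digitsOf p ⁻¹' {x | phiOmegaSum p ω m x = j})) :=
        Measure.map_apply hmτ hE
    _ = μ (digitsOf p ⁻¹' {x | phiOmegaSum p ω m x = m * ζ - j}) := by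
        rw [hμ, Measure.restrict_apply (hmτ hE), Measure.restrict_apply hE']
        apply vol_eq_of_diff (z := {u : ℝ | ¬ NPred p u})
        · rintro u ⟨h1, h2⟩
          by_cases hN : NPred p u
          · exact Or.inl ⟨(hpt u h2 hN).mp h1, h2⟩
          · exact Or.inr hN
        · rintro u ⟨h1, h2⟩
          by_cases hN : NPred p u
          · exact Or.inl ⟨(hpt u h2 hN).mpr h1, h2⟩
          · exact Or.inr hN
        · exact badset_null hp


end Chacon
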